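/- Let Π = ⟨x₁, x₂, x₃ | x₁²x₂²x₃² = 1⟩ with φ : Π → PSL(2, ℂ) defined by φ(x₁) = ±diag(ζ₈, ζ₈⁻¹), φ(x₂) = ±diag(ζ₈⁻¹, ζ₈), φ(x₃) = ±[[0, −ζ₈],[ζ₈⁻¹, 0]]. Let Π̃ ≤ Π be the index-2 subgroup generated by all products x_i x_j (1 ≤ i, j ≤ 3). Then φ(Π̃) = H = {±I₂, ±iσ₁, ±iσ₂, ±iσ₃} ⊂ PSL(2, ℂ), and hence the centralizer of φ(Π̃) is H, a nontrivial finite group. -/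

import Mathlib

open Complex Matrix

/-- `PSL(2,ℂ)`, the quotient of `SL(2,ℂ)` by its centre `{±I₂}`. -/
abbrev PSL2C : Type :=
  Matrix.SpecialLinearGroup (Fin 2) ℂ ⧸ Subgroup.center (Matrix.SpecialLinearGroup (Fin 2) ℂ)

/-- The subset `H = {±I₂, ±iσ₁, ±iσ₂, ±iσ₃}` of `PSL(2,ℂ)` (images of the listed
`SL(2,ℂ)` matrices). -/
def KleinSet : Set PSL2C :=
  {x | ∃ A : Matrix.SpecialLinearGroup (Fin 2) ℂ,
    QuotientGroup.mk' (Subgroup.center (Matrix.SpecialLinearGroup (Fin 2) ℂ)) A = x ∧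
    ((A : Matrix (Fin 2) (Fin 2) ℂ) ∈
      ({1, -1, I • !![0, 1; 1, 0], -(I • !![0, 1; 1, 0]),
        I • !![0, -I; I, 0], -(I • !![0, -I; I, 0]),
        I • !![1, 0; 0, -1], -(I • !![1, 0; 0, -1])} : Set (Matrix (Fin 2) (Fin 2) ℂ)))}

namespace K14
abbrev SL2 := Matrix.SpecialLinearGroup (Fin 2) ℂ
noncomputable abbrev pr : SL2 →* PSL2C := QuotientGroup.mk' (Subgroup.center SL2)

def sl (a b c d : ℂ) (h : a * d - b * c = 1) : SL2 :=
  ⟨!![a, b; c, d], by simpa [Matrix.det_fin_two_of] using h⟩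

@[simp] lemma sl_coe (a b c d : ℂ) (h) :
    ((sl a b c d h : SL2) : Matrix (Fin 2) (Fin 2) ℂ) = !![a,b;c,d] := rfl

/-- the eight matrices, explicitly -/
def S : Set (Matrix (Fin 2) (Fin 2) ℂ) :=
  {!![1,0;0,1], !![-1,0;0,-1], !![0,I;I,0], !![0,-I;-I,0],
   !![0,1;-1,0], !![0,-1;1,0], !![I,0;0,-I], !![-I,0;0,I]}

lemma S_eq : ({1, -1, I • !![0, 1; 1, 0], -(I • !![0, 1; 1, 0]),
        I • !![0, -I; I, 0], -(I • !![0, -I; I, 0]),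
        I • !![1, 0; 0, -1], -(I • !![1, 0; 0, -1])} : Set (Matrix (Fin 2) (Fin 2) ℂ)) = S := by
  have h1 : (1 : Matrix (Fin 2) (Fin 2) ℂ) = !![1,0;0,1] := by
    ext i j; fin_cases i <;> fin_cases j <;> simp [Matrix.one_apply]
  have h2 : (-1 : Matrix (Fin 2) (Fin 2) ℂ) = !![-1,0;0,-1] := by
    ext i j; fin_cases i <;> fin_cases j <;> simp [Matrix.one_apply]
  have h3 : I • !![0, (1:ℂ); 1, 0] = !![0,I;I,0] := by
    ext i j; fin_cases i <;> fin_cases j <;> simp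
  have h4 : -(I • !![0, (1:ℂ); 1, 0]) = !![0,-I;-I,0] := by
    ext i j; fin_cases i <;> fin_cases j <;> simp
  have h5 : I • !![0, -I; I, 0] = !![0,(1:ℂ);-1,0] := by
    ext i j; fin_cases i <;> fin_cases j <;> simp
  have h6 : -(I • !![0, -I; I, 0]) = !![0,(-1:ℂ);1,0] := by
    ext i j; fin_cases i <;> fin_cases j <;> simp
  have h7 : I • !![(1:ℂ), 0; 0, -1] = !![I,0;0,-I] := by
    ext i j; fin_cases i <;> fin_cases j <;> simp
  have h8 : -(I • !![(1:ℂ), 0; 0, -1]) = !![-I,0;0,I] := by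
    ext i j; fin_cases i <;> fin_cases j <;> simp
  rw [h8, h7, h6, h5, h4, h3, h2, h1, S]

lemma kleinSet_eq : KleinSet = {x | ∃ A : SL2, pr A = x ∧ (A : Matrix (Fin 2) (Fin 2) ℂ) ∈ S} := by
  rw [KleinSet]; simp only [S_eq]

end K14

namespace K14
lemma S_mul_closed {M N : Matrix (Fin 2) (Fin 2) ℂ} (hM : M ∈ S) (hN : N ∈ S) : M * N ∈ S := by
  simp only [S, Set.mem_insert_iff, Set.mem_singleton_iff] at hM hN ⊢
  rcases hM with rfl|rfl|rfl|rfl|rfl|rfl|rfl|rfl <;>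
    rcases hN with rfl|rfl|rfl|rfl|rfl|rfl|rfl|rfl <;>
    norm_num [Matrix.mul_fin_two, ← Matrix.ext_iff, Fin.forall_fin_two]

lemma S_sq {M : Matrix (Fin 2) (Fin 2) ℂ} (hM : M ∈ S) :
    M * M = !![1,0;0,1] ∨ M * M = !![-1,0;0,-1] := by
  simp only [S, Set.mem_insert_iff, Set.mem_singleton_iff] at hM
  rcases hM with rfl|rfl|rfl|rfl|rfl|rfl|rfl|rfl <;>
    norm_num [Matrix.mul_fin_two, ← Matrix.ext_iff, Fin.forall_fin_two]

lemma S_comm {M N : Matrix (Fin 2) (Fin 2) ℂ} (hM : M ∈ S) (hN : N ∈ S) :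
    M * N = N * M ∨ M * N = -(N * M) := by
  simp only [S, Set.mem_insert_iff, Set.mem_singleton_iff] at hM hN
  rcases hM with rfl|rfl|rfl|rfl|rfl|rfl|rfl|rfl <;>
    rcases hN with rfl|rfl|rfl|rfl|rfl|rfl|rfl|rfl <;>
    norm_num [Matrix.mul_fin_two, ← Matrix.ext_iff, Fin.forall_fin_two]
end K14

namespace K14

lemma mem_center_iff' {A : SL2} :
    A ∈ Subgroup.center SL2 ↔ (A : Matrix (Fin 2) (Fin 2) ℂ) = 1 ∨ (A : Matrix (Fin 2) (Fin 2) ℂ) = -1 := by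
  rw [Matrix.SpecialLinearGroup.mem_center_iff]
  constructor
  · rintro ⟨r, hr, hA⟩
    have h2 : r = 1 ∨ r = -1 := by
      have : (r - 1) * (r + 1) = 0 := by
        have : r ^ 2 = 1 := by simpa using hr
        linear_combination this
      rcases mul_eq_zero.mp this with h | h
      · left; linear_combination h
      · right; linear_combination h
    rcases h2 with rfl | rfl
    · left; rw [← hA]; simp
    · right; rw [← hA]; simp [Matrix.scalar_apply]
      ext i j; simp [Matrix.diagonal_apply, Matrix.one_apply]; split <;> simp_all
  · rintro (h | h)
    · exact ⟨1, by simp, by rw [h]; simp⟩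
    · refine ⟨-1, by norm_num, ?_⟩
      rw [h]
      ext i j
      simp [Matrix.scalar_apply, Matrix.diagonal_apply, Matrix.one_apply]
      split <;> simp_all


lemma pr_eq_of_coe {A B : SL2} (h : (A : Matrix (Fin 2) (Fin 2) ℂ) = B) : pr A = pr B := by
  congr 1; exact Subtype.ext h

lemma pr_eq_of_neg_coe {A B : SL2} (h : (A : Matrix (Fin 2) (Fin 2) ℂ) = -(B : Matrix (Fin 2) (Fin 2) ℂ)) :
    pr A = pr B := by
  rw [QuotientGroup.mk'_eq_mk']
  refine ⟨A⁻¹ * B, ?_, by group⟩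
  rw [mem_center_iff']
  right
  have : ((A⁻¹ * B : SL2) : Matrix (Fin 2) (Fin 2) ℂ) = A⁻¹.1 * B.1 := rfl
  rw [this]
  have hA : (A⁻¹ : SL2).1 * A.1 = 1 := by
    rw [← Matrix.SpecialLinearGroup.coe_mul]; simp
  calc (A⁻¹:SL2).1 * B.1 = (A⁻¹:SL2).1 * -(-B.1) := by simp
    _ = -((A⁻¹:SL2).1 * A.1) := by rw [← h]; simp
    _ = -1 := by rw [hA]

lemma pr_eq_one_of_coe {A : SL2} (h : (A : Matrix (Fin 2) (Fin 2) ℂ) = 1 ∨ (A : Matrix (Fin 2) (Fin 2) ℂ) = -1) :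
    pr A = 1 := by
  rw [QuotientGroup.mk'_apply, QuotientGroup.eq_one_iff, mem_center_iff']
  exact h

lemma one_mem_KS : (1 : PSL2C) ∈ KleinSet := by
  rw [kleinSet_eq]
  exact ⟨1, by simp, by
    have : ((1:SL2) : Matrix (Fin 2) (Fin 2) ℂ) = !![1,0;0,1] := by
      ext i j; fin_cases i <;> fin_cases j <;> simp [Matrix.one_apply]
    rw [this]; simp [S]⟩

lemma mul_mem_KS {x y : PSL2C} (hx : x ∈ KleinSet) (hy : y ∈ KleinSet) : x * y ∈ KleinSet := by
  rw [kleinSet_eq] at *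
  obtain ⟨A, rfl, hA⟩ := hx
  obtain ⟨B, rfl, hB⟩ := hy
  exact ⟨A * B, by simp, S_mul_closed hA hB⟩

lemma sq_KS {x : PSL2C} (hx : x ∈ KleinSet) : x * x = 1 := by
  rw [kleinSet_eq] at hx
  obtain ⟨A, rfl, hA⟩ := hx
  rw [← _root_.map_mul]
  apply pr_eq_one_of_coe
  rcases S_sq hA with h | h <;> [left; right] <;>
    · rw [Matrix.SpecialLinearGroup.coe_mul, h]
      ext i j; fin_cases i <;> fin_cases j <;> simp [Matrix.one_apply]

lemma inv_mem_KS {x : PSL2C} (hx : x ∈ KleinSet) : x⁻¹ ∈ KleinSet := by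
  rw [inv_eq_of_mul_eq_one_left (sq_KS hx)]; exact hx

/-- KleinSet as a subgroup. -/
noncomputable def KleinSubgroup : Subgroup PSL2C where
  carrier := KleinSet
  one_mem' := one_mem_KS
  mul_mem' := mul_mem_KS
  inv_mem' := inv_mem_KS

lemma kleinSet_coe : (KleinSubgroup : Set PSL2C) = KleinSet := rfl

end K14

namespace K14

noncomputable def Xg : SL2 := sl 0 I I 0 (by norm_num [Complex.I_mul_I])
noncomputable def Zg : SL2 := sl I 0 0 (-I) (by norm_num [Complex.I_mul_I])

lemma prX_mem : pr Xg ∈ KleinSet := by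
  rw [kleinSet_eq]; exact ⟨Xg, rfl, by simp [S, Xg]⟩

lemma prZ_mem : pr Zg ∈ KleinSet := by
  rw [kleinSet_eq]; exact ⟨Zg, rfl, by simp [S, Zg]⟩

lemma comm_lift {A B : SL2} (h : pr B * pr A = pr A * pr B) :
    B.1 * A.1 = A.1 * B.1 ∨ B.1 * A.1 = -(A.1 * B.1) := by
  rw [← _root_.map_mul, ← _root_.map_mul, QuotientGroup.mk'_eq_mk'] at h
  obtain ⟨z, hz, hzeq⟩ := h
  have hc := congrArg (fun (M : SL2) => (M : Matrix (Fin 2) (Fin 2) ℂ)) hzeq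
  simp only [Matrix.SpecialLinearGroup.coe_mul] at hc
  rcases mem_center_iff'.mp hz with h1 | h1 <;> rw [h1] at hc
  · left; simpa using hc
  · right
    have : B.1 * A.1 * -1 = A.1 * B.1 := by simpa using hc
    calc B.1 * A.1 = -(B.1 * A.1 * -1) := by simp
      _ = -(A.1 * B.1) := by rw [this]

lemma centralizer_sub : (Subgroup.centralizer KleinSet : Set PSL2C) ⊆ KleinSet := by
  intro x hx
  rw [SetLike.mem_coe, Subgroup.mem_centralizer_iff] at hx
  obtain ⟨A, rfl⟩ := QuotientGroup.mk'_surjective (Subgroup.center SL2) x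
  have hX := comm_lift (hx (pr Xg) prX_mem)
  have hZ := comm_lift (hx (pr Zg) prZ_mem)
  rw [kleinSet_eq]
  refine ⟨A, rfl, ?_⟩
  have hdet : Matrix.det (A : Matrix (Fin 2) (Fin 2) ℂ) = 1 := A.2
  have hM : (A : Matrix (Fin 2) (Fin 2) ℂ)
      = !![A.1 0 0, A.1 0 1; A.1 1 0, A.1 1 1] := Matrix.eta_fin_two A.1
  set a := A.1 0 0; set b := A.1 0 1; set c := A.1 1 0; set d := A.1 1 1
  rw [hM] at hX hZ hdet ⊢
  rw [Matrix.det_fin_two_of] at hdet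
  simp only [Xg, Zg, sl_coe, Matrix.mul_fin_two, ← Matrix.ext_iff, Fin.forall_fin_two] at hX hZ
  norm_num at hX hZ
  have two_I : (2 : ℂ) * I ≠ 0 := by simp
  have hIa : ∀ u v : ℂ, I * u = v * I → u = v := by
    intro u v h; linear_combination (-I) * h + (u - v) * Complex.I_sq
  have hIn : ∀ u v : ℂ, I * u = -(v * I) → u = -v := by
    intro u v h; linear_combination (-I) * h + (u + v) * Complex.I_sq
  rcases hZ with ⟨⟨_, hb⟩, hc, _⟩ | ⟨⟨ha, _⟩, _, hd⟩
  · -- b = 0, c = 0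
    have hb0 : b = 0 := by
      have h2 : (2 * I) * b = 0 := by linear_combination hb
      exact (mul_eq_zero.mp h2).resolve_left two_I
    have hc0 : c = 0 := by
      have h2 : (2 * I) * c = 0 := by linear_combination -hc
      exact (mul_eq_zero.mp h2).resolve_left two_I
    rcases hX with ⟨⟨_, hda⟩, _, _⟩ | ⟨⟨_, hda⟩, _, _⟩
    · have hd0 : d = a := hIa d a hda
      rw [hb0, hc0, hd0] at hdet ⊢
      have : a * a = 1 := by linear_combination hdet
      rcases mul_self_eq_one_iff.mp this with h3 | h3 <;> rw [h3] <;> norm_num [S]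
    · have hd0 : d = -a := hIn d a hda
      rw [hb0, hc0, hd0] at hdet ⊢
      have h2 : (a - I) * (a + I) = 0 := by linear_combination -hdet - Complex.I_sq
      rcases mul_eq_zero.mp h2 with h3 | h3
      · have : a = I := by linear_combination h3
        rw [this]; norm_num [S]
      · have : a = -I := by linear_combination h3
        rw [this]; norm_num [S]
  · -- a = 0, d = 0
    have ha0 : a = 0 := by
      have h2 : (2 * I) * a = 0 := by linear_combination ha
      exact (mul_eq_zero.mp h2).resolve_left two_I
    have hd0 : d = 0 := by
      have h2 : (2 * I) * d = 0 := by linear_combination -hd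
      exact (mul_eq_zero.mp h2).resolve_left two_I
    rcases hX with ⟨⟨hcb, _⟩, _, _⟩ | ⟨⟨hcb, _⟩, _, _⟩
    · have hc0 : c = b := hIa c b hcb
      rw [ha0, hd0, hc0] at hdet ⊢
      have h2 : (b - I) * (b + I) = 0 := by linear_combination -hdet - Complex.I_sq
      rcases mul_eq_zero.mp h2 with h3 | h3
      · have : b = I := by linear_combination h3
        rw [this]; norm_num [S]
      · have : b = -I := by linear_combination h3
        rw [this]; norm_num [S]
    · have hc0 : c = -b := hIn c b hcb
      rw [ha0, hd0, hc0] at hdet ⊢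
      have : b * b = 1 := by linear_combination hdet
      rcases mul_self_eq_one_iff.mp this with h3 | h3 <;> rw [h3] <;> norm_num [S]

end K14

namespace K14

lemma sub_centralizer : KleinSet ⊆ (Subgroup.centralizer KleinSet : Set PSL2C) := by
  intro x hx
  rw [SetLike.mem_coe, Subgroup.mem_centralizer_iff]
  intro y hy
  rw [kleinSet_eq] at hx hy
  obtain ⟨A, rfl, hA⟩ := hx
  obtain ⟨B, rfl, hB⟩ := hy
  rw [← _root_.map_mul, ← _root_.map_mul]
  rcases S_comm hB hA with h | h
  · exact pr_eq_of_coe h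
  · exact pr_eq_of_neg_coe h

lemma centralizer_eq : (Subgroup.centralizer KleinSet : Set PSL2C) = KleinSet :=
  Set.Subset.antisymm centralizer_sub sub_centralizer

lemma klein_ne_one : KleinSet ≠ {1} := by
  intro h
  have hX : pr Xg ∈ ({1} : Set PSL2C) := h ▸ prX_mem
  rw [Set.mem_singleton_iff, QuotientGroup.mk'_apply, QuotientGroup.eq_one_iff,
    mem_center_iff'] at hX
  have : ((Xg : SL2) : Matrix (Fin 2) (Fin 2) ℂ) 0 0 = 0 := by simp [Xg]
  rcases hX with h1 | h1 <;> rw [h1] at this <;> simp [Matrix.one_apply] at this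

lemma klein_finite : KleinSet.Finite := by
  rw [kleinSet_eq]
  have : {x : PSL2C | ∃ A : SL2, pr A = x ∧ (A : Matrix (Fin 2) (Fin 2) ℂ) ∈ S}
      ⊆ (fun A : SL2 => pr A) '' ((fun A : SL2 => (A : Matrix (Fin 2) (Fin 2) ℂ)) ⁻¹' S) := by
    rintro x ⟨A, rfl, hA⟩
    exact ⟨A, hA, rfl⟩
  refine Set.Finite.subset (Set.Finite.image _ ?_) this
  have hS : S.Finite := by
    apply Set.Finite.insert; apply Set.Finite.insert; apply Set.Finite.insert
    apply Set.Finite.insert; apply Set.Finite.insert; apply Set.Finite.insert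
    apply Set.Finite.insert; exact Set.finite_singleton _
  exact Set.Finite.preimage (fun a _ b _ h => Subtype.ext h) hS

end K14

namespace K14

abbrev rels : Set (FreeGroup (Fin 3)) :=
  {FreeGroup.of 0 ^ 2 * FreeGroup.of 1 ^ 2 * FreeGroup.of 2 ^ 2}

abbrev Pi3 := PresentedGroup rels

abbrev Sgen : Set Pi3 := {w | ∃ i j : Fin 3, w = PresentedGroup.of i * PresentedGroup.of j}

noncomputable abbrev K : Subgroup Pi3 := Subgroup.closure Sgen

lemma pair_mem (i j : Fin 3) : (PresentedGroup.of i : Pi3) * PresentedGroup.of j ∈ K :=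
  Subgroup.subset_closure ⟨i, j, rfl⟩

lemma conj_mem (i : Fin 3) : ∀ h ∈ K, (PresentedGroup.of i : Pi3) * h * (PresentedGroup.of i)⁻¹ ∈ K := by
  intro h hh
  induction hh using Subgroup.closure_induction with
  | mem x hx =>
    obtain ⟨a, b, rfl⟩ := hx
    have : (PresentedGroup.of i : Pi3) * (PresentedGroup.of a * PresentedGroup.of b) * (PresentedGroup.of i)⁻¹
        = (PresentedGroup.of i * PresentedGroup.of a) *
          ((PresentedGroup.of b * PresentedGroup.of i) * (PresentedGroup.of i * PresentedGroup.of i)⁻¹) := by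
      group
    rw [this]
    exact mul_mem (pair_mem i a) (mul_mem (pair_mem b i) (inv_mem (pair_mem i i)))
  | one => simpa using one_mem K
  | mul x y hx hy ihx ihy =>
    have : (PresentedGroup.of i : Pi3) * (x * y) * (PresentedGroup.of i)⁻¹
        = (PresentedGroup.of i * x * (PresentedGroup.of i)⁻¹) *
          (PresentedGroup.of i * y * (PresentedGroup.of i)⁻¹) := by group
    rw [this]; exact mul_mem ihx ihy
  | inv x hx ih =>
    have : (PresentedGroup.of i : Pi3) * x⁻¹ * (PresentedGroup.of i)⁻¹
        = ((PresentedGroup.of i : Pi3) * x * (PresentedGroup.of i)⁻¹)⁻¹ := by group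
    rw [this]; exact inv_mem ih

lemma conj_mem' (i : Fin 3) : ∀ h ∈ K, ((PresentedGroup.of i : Pi3))⁻¹ * h * PresentedGroup.of i ∈ K := by
  intro h hh
  induction hh using Subgroup.closure_induction with
  | mem x hx =>
    obtain ⟨a, b, rfl⟩ := hx
    have : ((PresentedGroup.of i : Pi3))⁻¹ * (PresentedGroup.of a * PresentedGroup.of b) * PresentedGroup.of i
        = (PresentedGroup.of i * PresentedGroup.of i)⁻¹ *
          ((PresentedGroup.of i * PresentedGroup.of a) * (PresentedGroup.of b * PresentedGroup.of i)) := by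
      group
    rw [this]
    exact mul_mem (inv_mem (pair_mem i i)) (mul_mem (pair_mem i a) (pair_mem b i))
  | one => simpa using one_mem K
  | mul x y hx hy ihx ihy =>
    have : ((PresentedGroup.of i : Pi3))⁻¹ * (x * y) * PresentedGroup.of i
        = ((PresentedGroup.of i : Pi3))⁻¹ * x * PresentedGroup.of i *
          (((PresentedGroup.of i : Pi3))⁻¹ * y * PresentedGroup.of i) := by group
    rw [this]; exact mul_mem ihx ihy
  | inv x hx ih =>
    have : ((PresentedGroup.of i : Pi3))⁻¹ * x⁻¹ * PresentedGroup.of i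
        = (((PresentedGroup.of i : Pi3))⁻¹ * x * PresentedGroup.of i)⁻¹ := by group
    rw [this]; exact inv_mem ih

lemma K_normal : K.Normal := by
  rw [← Subgroup.normalizer_eq_top_iff]
  rw [eq_top_iff]
  intro g _
  refine PresentedGroup.generated_by rels (Subgroup.normalizer (K : Set Pi3)) (fun j => ?_) g
  rw [Subgroup.mem_normalizer_iff]
  intro h
  constructor
  · exact fun hh => conj_mem j h hh
  · intro hh
    have := conj_mem' j _ hh
    simpa [mul_assoc] using this

noncomputable def psi : Pi3 →* Multiplicative (ZMod 2) :=
  PresentedGroup.toGroup (f := fun _ => Multiplicative.ofAdd 1) (by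
    intro r hr
    rw [Set.mem_singleton_iff] at hr
    subst hr
    simp only [_root_.map_mul, _root_.map_pow, FreeGroup.lift_apply_of]
    decide)

lemma of0_not_mem : (PresentedGroup.of 0 : Pi3) ∉ K := by
  intro h
  have hK : K ≤ psi.ker := by
    rw [Subgroup.closure_le]
    rintro w ⟨i, j, rfl⟩
    have : psi (PresentedGroup.of i * PresentedGroup.of j) = 1 := by
      rw [_root_.map_mul]
      simp only [psi, PresentedGroup.toGroup.of]
      decide
    exact this
  have : psi (PresentedGroup.of 0) = 1 := hK h
  rw [psi, PresentedGroup.toGroup.of] at this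
  exact absurd this (by decide)

lemma index_K : K.index = 2 := by
  haveI : K.Normal := K_normal
  have hmk : ∀ i : Fin 3, (QuotientGroup.mk (PresentedGroup.of i) : Pi3 ⧸ K)
      = QuotientGroup.mk (PresentedGroup.of 0) := by
    intro i
    rw [QuotientGroup.eq]
    have : ((PresentedGroup.of i : Pi3))⁻¹ * PresentedGroup.of 0
        = (PresentedGroup.of i * PresentedGroup.of i)⁻¹ *
          (PresentedGroup.of i * PresentedGroup.of 0) := by group
    rw [this]
    exact mul_mem (inv_mem (pair_mem i i)) (pair_mem i 0)
  set t : Pi3 ⧸ K := QuotientGroup.mk (PresentedGroup.of 0) with ht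
  have ht2 : t * t = 1 := by
    rw [ht, ← QuotientGroup.mk_mul, QuotientGroup.eq_one_iff]
    exact pair_mem 0 0
  have htne : t ≠ 1 := by
    rw [ht]
    intro h
    exact of0_not_mem ((QuotientGroup.eq_one_iff _).mp h)
  have htop : Subgroup.zpowers t = ⊤ := by
    rw [eq_top_iff]
    intro q _
    obtain ⟨w, rfl⟩ := QuotientGroup.mk_surjective q
    revert w
    have : ∀ w : Pi3, w ∈ Subgroup.comap (QuotientGroup.mk' K) (Subgroup.zpowers t) := by
      intro w
      refine PresentedGroup.generated_by rels _ (fun j => ?_) w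
      rw [Subgroup.mem_comap]
      have : QuotientGroup.mk' K (PresentedGroup.of j) = t := hmk j
      rw [this]
      exact Subgroup.mem_zpowers t
    exact fun w _ => this w
  have hcard : Nat.card (Pi3 ⧸ K) = 2 := by
    have h1 : Nat.card (Pi3 ⧸ K) = Nat.card (⊤ : Subgroup (Pi3 ⧸ K)) :=
      (Subgroup.card_top).symm
    rw [h1, ← htop, Nat.card_zpowers]
    exact orderOf_eq_prime (by rw [pow_two]; exact ht2) htne
  exact hcard

end K14

namespace K14

noncomputable def Mats : Fin 3 → Matrix (Fin 2) (Fin 2) ℂ :=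
  ![!![exp ((Real.pi : ℂ) * I / 4), 0; 0, (exp ((Real.pi : ℂ) * I / 4))⁻¹],
    !![(exp ((Real.pi : ℂ) * I / 4))⁻¹, 0; 0, exp ((Real.pi : ℂ) * I / 4)],
    !![0, -exp ((Real.pi : ℂ) * I / 4); (exp ((Real.pi : ℂ) * I / 4))⁻¹, 0]]

lemma zeta_sq : exp ((Real.pi : ℂ) * I / 4) * exp ((Real.pi : ℂ) * I / 4) = I := by
  rw [← Complex.exp_add]
  have : (Real.pi : ℂ) * I / 4 + (Real.pi : ℂ) * I / 4 = (↑(Real.pi/2) : ℂ) * I := by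
    push_cast; ring
  rw [this, Complex.exp_mul_I]
  simp [Complex.ofReal_cos, Complex.ofReal_sin]

lemma zeta_mul_inv : exp ((Real.pi : ℂ) * I / 4) * (exp ((Real.pi : ℂ) * I / 4))⁻¹ = 1 :=
  mul_inv_cancel₀ (Complex.exp_ne_zero _)

lemma zeta_inv_mul : (exp ((Real.pi : ℂ) * I / 4))⁻¹ * exp ((Real.pi : ℂ) * I / 4) = 1 :=
  inv_mul_cancel₀ (Complex.exp_ne_zero _)

lemma zeta_inv_sq : (exp ((Real.pi : ℂ) * I / 4))⁻¹ * (exp ((Real.pi : ℂ) * I / 4))⁻¹ = -I := by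
  rw [← mul_inv, zeta_sq, Complex.inv_I]

lemma Mats_mul_mem_S : ∀ i j : Fin 3, Mats i * Mats j ∈ S := by
  intro i j
  fin_cases i <;> fin_cases j <;>
    norm_num [Mats, S, Matrix.mul_fin_two, ← Matrix.ext_iff, Fin.forall_fin_two,
      zeta_sq, zeta_mul_inv, zeta_inv_mul, zeta_inv_sq]

lemma Mats_00 : Mats 0 * Mats 0 = !![I, 0; 0, -I] := by
  norm_num [Mats, Matrix.mul_fin_two, ← Matrix.ext_iff, Fin.forall_fin_two,
    zeta_sq, zeta_mul_inv, zeta_inv_mul, zeta_inv_sq]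

lemma Mats_02 : Mats 0 * Mats 2 = !![0, -I; -I, 0] := by
  norm_num [Mats, Matrix.cons_val_two, Matrix.vecHead, Matrix.vecTail, Matrix.mul_fin_two, ← Matrix.ext_iff, Fin.forall_fin_two,
    zeta_sq, zeta_mul_inv, zeta_inv_mul, zeta_inv_sq]

lemma Mats_12 : Mats 1 * Mats 2 = !![0, -1; 1, 0] := by
  norm_num [Mats, Matrix.cons_val_two, Matrix.vecHead, Matrix.vecTail, Matrix.mul_fin_two, ← Matrix.ext_iff, Fin.forall_fin_two,
    zeta_sq, zeta_mul_inv, zeta_inv_mul, zeta_inv_sq]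

lemma image_eq (φ : Pi3 →* PSL2C)
    (hφ : ∀ i : Fin 3, ∃ B : SL2, pr B = φ (PresentedGroup.of i) ∧
      (B : Matrix (Fin 2) (Fin 2) ℂ) = Mats i) :
    ((K.map φ : Subgroup PSL2C) : Set PSL2C) = KleinSet := by
  apply Set.Subset.antisymm
  · -- forward inclusion via closure_le
    have hle : K.map φ ≤ KleinSubgroup := by
      rw [MonoidHom.map_closure]
      refine (Subgroup.closure_le _).mpr ?_
      rintro _ ⟨w, ⟨i, j, rfl⟩, rfl⟩
      show φ (PresentedGroup.of i * PresentedGroup.of j) ∈ KleinSet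
      obtain ⟨Bi, hBi, hBic⟩ := hφ i
      obtain ⟨Bj, hBj, hBjc⟩ := hφ j
      rw [kleinSet_eq]
      refine ⟨Bi * Bj, ?_, ?_⟩
      · rw [_root_.map_mul, hBi, hBj, ← _root_.map_mul]
      · rw [Matrix.SpecialLinearGroup.coe_mul, hBic, hBjc]
        exact Mats_mul_mem_S i j
    exact hle
  · -- reverse inclusion
    intro x hx
    rw [kleinSet_eq] at hx
    obtain ⟨B, rfl, hB⟩ := hx
    have hmem : ∀ (i j : Fin 3),
        ((B : Matrix (Fin 2) (Fin 2) ℂ) = Mats i * Mats j ∨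
         (B : Matrix (Fin 2) (Fin 2) ℂ) = -(Mats i * Mats j)) → pr B ∈ K.map φ := by
      intro i j h
      obtain ⟨Bi, hBi, hBic⟩ := hφ i
      obtain ⟨Bj, hBj, hBjc⟩ := hφ j
      refine ⟨PresentedGroup.of i * PresentedGroup.of j, pair_mem i j, ?_⟩
      rw [_root_.map_mul, ← hBi, ← hBj, ← _root_.map_mul]
      have hcoe : ((Bi * Bj : SL2) : Matrix (Fin 2) (Fin 2) ℂ) = Mats i * Mats j := by
        rw [Matrix.SpecialLinearGroup.coe_mul, hBic, hBjc]
      rcases h with h | h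
      · exact (pr_eq_of_coe (by rw [h, ← hcoe])).symm
      · exact (pr_eq_of_neg_coe (by rw [h, hcoe])).symm
    have hone : ∀ (h : (B : Matrix (Fin 2) (Fin 2) ℂ) = 1 ∨ (B : Matrix (Fin 2) (Fin 2) ℂ) = -1),
        pr B ∈ K.map φ := by
      intro h
      rw [pr_eq_one_of_coe h]
      exact Subgroup.one_mem _
    simp only [S, Set.mem_insert_iff, Set.mem_singleton_iff] at hB
    have mone : (1 : Matrix (Fin 2) (Fin 2) ℂ) = !![1,0;0,1] := by
      ext i j; fin_cases i <;> fin_cases j <;> simp [Matrix.one_apply]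
    rcases hB with h|h|h|h|h|h|h|h
    · exact hone (Or.inl (by rw [h, mone]))
    · refine hone (Or.inr ?_)
      rw [h]
      norm_num [← Matrix.ext_iff, Fin.forall_fin_two, Matrix.one_apply]
    · refine hmem 0 2 (Or.inr ?_)
      rw [h, Mats_02]
      norm_num [← Matrix.ext_iff, Fin.forall_fin_two]
    · exact hmem 0 2 (Or.inl (by rw [h, Mats_02]))
    · refine hmem 1 2 (Or.inr ?_)
      rw [h, Mats_12]
      norm_num [← Matrix.ext_iff, Fin.forall_fin_two]
    · exact hmem 1 2 (Or.inl (by rw [h, Mats_12]))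
    · exact hmem 0 0 (Or.inl (by rw [h, Mats_00]))
    · refine hmem 0 0 (Or.inr ?_)
      rw [h, Mats_00]
      norm_num [← Matrix.ext_iff, Fin.forall_fin_two]

end K14


/-- Let `Π = ⟨x₁, x₂, x₃ | x₁²x₂²x₃² = 1⟩`, with
`φ : Π → PSL(2,ℂ)` given by `φ(x₁) = ±diag(ζ₈, ζ₈⁻¹)`, `φ(x₂) = ±diag(ζ₈⁻¹, ζ₈)`,
`φ(x₃) = ±[[0, −ζ₈],[ζ₈⁻¹, 0]]`, and let `Π̃` be the index-2 subgroup of `Π`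
generated by the products `x_i x_j`.  Then `φ(Π̃) = H = {±I₂, ±iσ₁, ±iσ₂, ±iσ₃}`,
and hence the centralizer of `φ(Π̃)` is `H`, a nontrivial finite group. -/
theorem restriction_to_index_two_subgroup_has_Klein_stabilizer
    (φ : PresentedGroup
        ({FreeGroup.of 0 ^ 2 * FreeGroup.of 1 ^ 2 * FreeGroup.of 2 ^ 2} :
          Set (FreeGroup (Fin 3))) →* PSL2C)
    (h1 : ∃ A : Matrix.SpecialLinearGroup (Fin 2) ℂ,
        QuotientGroup.mk' _ A = φ (PresentedGroup.of 0) ∧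
        (A : Matrix (Fin 2) (Fin 2) ℂ)
          = !![exp ((Real.pi : ℂ) * I / 4), 0; 0, (exp ((Real.pi : ℂ) * I / 4))⁻¹])
    (h2 : ∃ A : Matrix.SpecialLinearGroup (Fin 2) ℂ,
        QuotientGroup.mk' _ A = φ (PresentedGroup.of 1) ∧
        (A : Matrix (Fin 2) (Fin 2) ℂ)
          = !![(exp ((Real.pi : ℂ) * I / 4))⁻¹, 0; 0, exp ((Real.pi : ℂ) * I / 4)])
    (h3 : ∃ A : Matrix.SpecialLinearGroup (Fin 2) ℂ,
        QuotientGroup.mk' _ A = φ (PresentedGroup.of 2) ∧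
        (A : Matrix (Fin 2) (Fin 2) ℂ)
          = !![0, -exp ((Real.pi : ℂ) * I / 4); (exp ((Real.pi : ℂ) * I / 4))⁻¹, 0]) :
    (Subgroup.closure
        {w : PresentedGroup
          ({FreeGroup.of 0 ^ 2 * FreeGroup.of 1 ^ 2 * FreeGroup.of 2 ^ 2} :
            Set (FreeGroup (Fin 3))) |
          ∃ i j : Fin 3, w = PresentedGroup.of i * PresentedGroup.of j}).index = 2 ∧
    ((Subgroup.closure
        {w : PresentedGroup
          ({FreeGroup.of 0 ^ 2 * FreeGroup.of 1 ^ 2 * FreeGroup.of 2 ^ 2} :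
            Set (FreeGroup (Fin 3))) |
          ∃ i j : Fin 3, w = PresentedGroup.of i * PresentedGroup.of j}).map φ :
      Set PSL2C) = KleinSet ∧
    (Subgroup.centralizer KleinSet : Set PSL2C) = KleinSet ∧
    KleinSet ≠ {1} ∧ KleinSet.Finite := by
  obtain ⟨A1, hA1, hc1⟩ := h1
  obtain ⟨A2, hA2, hc2⟩ := h2
  obtain ⟨A3, hA3, hc3⟩ := h3
  have hφ : ∀ i : Fin 3, ∃ B : K14.SL2, K14.pr B = φ (PresentedGroup.of i) ∧
      (B : Matrix (Fin 2) (Fin 2) ℂ) = K14.Mats i := by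
    intro i
    fin_cases i
    · exact ⟨A1, hA1, by rw [hc1]; rfl⟩
    · exact ⟨A2, hA2, by rw [hc2]; rfl⟩
    · exact ⟨A3, hA3, by rw [hc3]; rfl⟩
  exact ⟨K14.index_K, K14.image_eq φ hφ, K14.centralizer_eq, K14.klein_ne_one, K14.klein_finite⟩
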